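/- Let 𝒴 and 𝒰 be Polish spaces, P a Borel probability measure on 𝒴, ν a Borel probability measure on 𝒰, and D ⊆ 𝒴 × 𝒰 a Borel set. Then the supremum, over pairs of Borel measurable functions f : 𝒴 → [0,1] and g : 𝒰 → [−1,0] satisfying f(y) + g(u) ≤ 1_D(y,u) for all (y,u), of ∫ f dP + ∫ g dν, equals the supremum over pairs of Borel sets A ⊆ 𝒴 and B ⊆ 𝒰 with A × B ⊆ D of P(A) − 1 + ν(B). -/

import Mathlib

open MeasureTheory Set

lemma integrable_of_abs_le_one {α : Type*} [MeasurableSpace α] (μ : Measure α)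
    [IsProbabilityMeasure μ] {f : α → ℝ} (hf : Measurable f) (h : ∀ a, |f a| ≤ 1) :
    Integrable f μ := by
  refine (integrable_const (1:ℝ)).mono' hf.aestronglyMeasurable ?_
  filter_upwards with a
  simpa [Real.norm_eq_abs] using h a

lemma toReal_meas_le_one {α : Type*} [MeasurableSpace α] (μ : Measure α)
    [IsProbabilityMeasure μ] (s : Set α) : (μ s).toReal ≤ 1 := by
  have := ENNReal.toReal_mono (measure_ne_top μ univ) (measure_mono (subset_univ s))
  simpa using this

/-- indicator-reduction step in the proof of Proposition 1: for Polish
spaces 𝒴, 𝒰, Borel probability measures P, ν, and a Borel set D ⊆ 𝒴 × 𝒰, the supremum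
of ∫ f dP + ∫ g dν over Borel measurable f : 𝒴 → [0,1] and g : 𝒰 → [−1,0] with
f(y) + g(u) ≤ 1_D(y,u) for all (y,u) equals the supremum over pairs of Borel sets
A ⊆ 𝒴, B ⊆ 𝒰 with A × B ⊆ D of P(A) − 1 + ν(B). -/
theorem stmt_4 {𝒴 𝒰 : Type*}
    [TopologicalSpace 𝒴] [PolishSpace 𝒴] [MeasurableSpace 𝒴] [BorelSpace 𝒴]
    [TopologicalSpace 𝒰] [PolishSpace 𝒰] [MeasurableSpace 𝒰] [BorelSpace 𝒰]
    (P : Measure 𝒴) [IsProbabilityMeasure P] (ν : Measure 𝒰) [IsProbabilityMeasure ν]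
    (D : Set (𝒴 × 𝒰)) (hD : MeasurableSet D) :
    sSup {x : ℝ | ∃ (f : 𝒴 → ℝ) (g : 𝒰 → ℝ), Measurable f ∧ Measurable g ∧
        (∀ y, f y ∈ Icc (0:ℝ) 1) ∧ (∀ u, g u ∈ Icc (-1:ℝ) 0) ∧
        (∀ y u, f y + g u ≤ D.indicator (fun _ => (1:ℝ)) (y, u)) ∧
        x = ∫ y, f y ∂P + ∫ u, g u ∂ν} =
    sSup {x : ℝ | ∃ (A : Set 𝒴) (B : Set 𝒰), MeasurableSet A ∧ MeasurableSet B ∧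
        A ×ˢ B ⊆ D ∧ x = (P A).toReal - 1 + (ν B).toReal} := by
  set R : Set ℝ := {x : ℝ | ∃ (A : Set 𝒴) (B : Set 𝒰), MeasurableSet A ∧ MeasurableSet B ∧
      A ×ˢ B ⊆ D ∧ x = (P A).toReal - 1 + (ν B).toReal} with hR
  set L : Set ℝ := {x : ℝ | ∃ (f : 𝒴 → ℝ) (g : 𝒰 → ℝ), Measurable f ∧ Measurable g ∧
      (∀ y, f y ∈ Icc (0:ℝ) 1) ∧ (∀ u, g u ∈ Icc (-1:ℝ) 0) ∧
      (∀ y u, f y + g u ≤ D.indicator (fun _ => (1:ℝ)) (y, u)) ∧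
      x = ∫ y, f y ∂P + ∫ u, g u ∂ν} with hL
  have hbddR : BddAbove R := by
    refine ⟨1, ?_⟩
    rintro x ⟨A, B, hA, hB, hAB, rfl⟩
    have h1 := toReal_meas_le_one P A
    have h2 := toReal_meas_le_one ν B
    linarith
  have hbddL : BddAbove L := by
    refine ⟨1, ?_⟩
    rintro x ⟨f, g, hf, hg, hf01, hg01, hfg, rfl⟩
    have hf_int : Integrable f P := integrable_of_abs_le_one P hf fun y => by
      rw [abs_le]; exact ⟨by linarith [(hf01 y).1], (hf01 y).2⟩
    have h1 : ∫ y, f y ∂P ≤ ∫ _, (1:ℝ) ∂P :=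
      integral_mono hf_int (integrable_const 1) fun y => (hf01 y).2
    have h2 : ∫ u, g u ∂ν ≤ 0 := integral_nonpos fun u => (hg01 u).2
    have h3 : ∫ _, (1:ℝ) ∂P = 1 := by simp
    linarith
  refine le_antisymm ?_ ?_
  · -- sSup L ≤ sSup R
    apply csSup_le
    · refine ⟨0, fun _ => 0, fun _ => 0, measurable_const, measurable_const,
        fun y => ⟨le_refl 0, zero_le_one⟩, fun u => ⟨by norm_num, le_refl 0⟩, fun y u => ?_, by simp⟩
      simpa using indicator_nonneg (fun _ _ => (zero_le_one : (0:ℝ) ≤ 1)) (y, u)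
    rintro x ⟨f, g, hf, hg, hf01, hg01, hfg, rfl⟩
    have hf_int : Integrable f P := integrable_of_abs_le_one P hf fun y => by
      rw [abs_le]; exact ⟨by linarith [(hf01 y).1], (hf01 y).2⟩
    have hg_int : Integrable g ν := integrable_of_abs_le_one ν hg fun u => by
      rw [abs_le]; exact ⟨(hg01 u).1, by linarith [(hg01 u).2]⟩
    set φ₁ : ℝ → ℝ := fun t => (P {y | t ≤ f y}).toReal with hφ₁
    set φ₂ : ℝ → ℝ := fun t => (ν {u | t ≤ -g u}).toReal with hφ₂
    have key₁ : ∫ y, f y ∂P = ∫ t in Ioc (0:ℝ) 1, φ₁ t :=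
      hf_int.integral_eq_integral_Ioc_meas_le (Filter.Eventually.of_forall fun y => (hf01 y).1)
        (Filter.Eventually.of_forall fun y => (hf01 y).2)
    have key₂ : ∫ u, -g u ∂ν = ∫ t in Ioc (0:ℝ) 1, φ₂ t :=
      hg_int.neg.integral_eq_integral_Ioc_meas_le
        (Filter.Eventually.of_forall fun u => by simpa using (hg01 u).2)
        (Filter.Eventually.of_forall fun u => by simpa using neg_le_neg (hg01 u).1)
    have keyg : ∫ u, g u ∂ν = - ∫ t in Ioc (0:ℝ) 1, φ₂ t := by
      rw [← key₂, integral_neg, neg_neg]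
    have hφ₁anti : Antitone φ₁ := fun s t hst =>
      ENNReal.toReal_mono (measure_ne_top _ _) (measure_mono fun y hy => le_trans hst hy)
    have hφ₂anti : Antitone φ₂ := fun s t hst =>
      ENNReal.toReal_mono (measure_ne_top _ _) (measure_mono fun u hu => le_trans hst hu)
    have hvol : (volume (Ioc (0:ℝ) 1)) < ⊤ := by simp [Real.volume_Ioc]
    have hφ₁int : IntegrableOn φ₁ (Ioc (0:ℝ) 1) := by
      refine Integrable.mono'
        ((integrableOn_const hvol.ne) : IntegrableOn (fun _ => (1:ℝ)) _ _)
        hφ₁anti.measurable.aestronglyMeasurable ?_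
      filter_upwards with t
      rw [Real.norm_eq_abs, abs_of_nonneg ENNReal.toReal_nonneg]
      exact toReal_meas_le_one P _
    have hφ₂int : IntegrableOn φ₂ (Ioc (0:ℝ) 1) := by
      refine Integrable.mono'
        ((integrableOn_const hvol.ne) : IntegrableOn (fun _ => (1:ℝ)) _ _)
        hφ₂anti.measurable.aestronglyMeasurable ?_
      filter_upwards with t
      rw [Real.norm_eq_abs, abs_of_nonneg ENNReal.toReal_nonneg]
      exact toReal_meas_le_one ν _
    rw [key₁, keyg, ← sub_eq_add_neg, ← integral_sub hφ₁int hφ₂int]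
    have hptwise : ∀ t ∈ Ioc (0:ℝ) 1, φ₁ t - φ₂ t ≤ sSup R := by
      intro t ht
      have hAB : {y | t ≤ f y} ×ˢ {u | -t < g u} ⊆ D := by
        rintro ⟨y, u⟩ ⟨hy, hu⟩
        by_contra hmem
        have hc := hfg y u
        rw [indicator_of_notMem hmem] at hc
        simp only [mem_setOf_eq] at hy hu
        linarith
      have hmem : (P {y | t ≤ f y}).toReal - 1 + (ν {u | -t < g u}).toReal ∈ R :=
        ⟨{y | t ≤ f y}, {u | -t < g u}, measurableSet_le measurable_const hf,
          measurableSet_lt measurable_const hg, hAB, rfl⟩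
      have hle := le_csSup hbddR hmem
      have hcompl : {u | t ≤ -g u} = {u | -t < g u}ᶜ := by
        ext u
        simp only [mem_setOf_eq, mem_compl_iff, not_lt]
        constructor
        · intro h; linarith
        · intro h; linarith
      have hφ₂eq : φ₂ t = 1 - (ν {u | -t < g u}).toReal := by
        rw [hφ₂]
        simp only
        rw [hcompl, measure_compl (measurableSet_lt measurable_const hg) (measure_ne_top _ _),
          measure_univ, ENNReal.toReal_sub_of_le prob_le_one ENNReal.one_ne_top,
          ENNReal.toReal_one]
      rw [hφ₂eq]
      linarith
    calc ∫ t in Ioc (0:ℝ) 1, (φ₁ t - φ₂ t) ≤ ∫ _ in Ioc (0:ℝ) 1, sSup R :=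
          setIntegral_mono_on (hφ₁int.sub hφ₂int) (integrableOn_const hvol.ne)
            measurableSet_Ioc hptwise
      _ = sSup R := by simp [Real.volume_Ioc]
  · -- sSup R ≤ sSup L
    refine csSup_le_csSup hbddL ⟨-1, ∅, ∅, MeasurableSet.empty, MeasurableSet.empty, by simp, by simp⟩ ?_
    rintro x ⟨A, B, hA, hB, hAB, rfl⟩
    refine ⟨A.indicator fun _ => 1, fun u => B.indicator (fun _ => 1) u - 1,
      measurable_const.indicator hA, (measurable_const.indicator hB).sub measurable_const,
      ?_, ?_, ?_, ?_⟩
    · intro y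
      by_cases hy : y ∈ A <;> simp [indicator_of_mem, indicator_of_notMem, hy]
    · intro u
      by_cases hu : u ∈ B <;> simp [indicator_of_mem, indicator_of_notMem, hu]
    · intro y u
      by_cases hy : y ∈ A
      · by_cases hu : u ∈ B
        · have hmem : (y, u) ∈ D := hAB ⟨hy, hu⟩
          simp [indicator_of_mem, hy, hu, hmem]
        · have : D.indicator (fun _ => (1:ℝ)) (y, u) ≥ 0 :=
            indicator_nonneg (fun _ _ => zero_le_one) _
          simp only [indicator_of_mem hy, indicator_of_notMem hu]
          linarith
      · have : D.indicator (fun _ => (1:ℝ)) (y, u) ≥ 0 :=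
          indicator_nonneg (fun _ _ => zero_le_one) _
        have hgle : B.indicator (fun _ => (1:ℝ)) u ≤ 1 := by
          by_cases hu : u ∈ B <;> simp [indicator_of_mem, indicator_of_notMem, hu]
        simp only [indicator_of_notMem hy]
        linarith
    · have h1 : ∫ y, A.indicator (fun _ => (1:ℝ)) y ∂P = (P A).toReal := by
        rw [integral_indicator_const (1:ℝ) hA]; simp [Measure.real]
      have h2 : ∫ u, (B.indicator (fun _ => (1:ℝ)) u - 1) ∂ν = (ν B).toReal - 1 := by
        rw [integral_sub ((integrable_const (1:ℝ)).indicator hB) (integrable_const 1),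
          integral_indicator_const (1:ℝ) hB]
        simp [Measure.real]
      rw [h1, h2]
      ring
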